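/- Let Ψ be a generalized eigenfunction of the extended CMV operator ℰ with ℰΨ = zΨ, and let |β| = |γ| = 1. Then for a < x < b, the Poisson formula holds: Ψ(x) = -G^{β,γ}_{[a,b],z}(x,a)·B_a - G^{β,γ}_{[a,b],z}(x,b)·B_b, where B_a = Ψ(a)(z·conj(β) - z·conj(α_{a-1})) + Ψ(a-1)·z·ρ_{a-1} if a is odd and B_a = Ψ(a)(α_{a-1} - β) - Ψ(a-1)·ρ_{a-1} if a is even, and B_b = Ψ(b)(conj(γ) - conj(α_b)) - Ψ(b+1)·ρ_b if b is odd and B_b = Ψ(b)(zα_b - zγ) + Ψ(b+1)·z·ρ_b if b is even. -/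

import Mathlib

open Complex BigOperators
open scoped Classical

/-- ρ_n = sqrt(1 - |α_n|²). -/
noncomputable def rho (α : ℤ → ℂ) (n : ℤ) : ℝ := Real.sqrt (1 - ‖α n‖ ^ 2)

/-- 𝓛 = ⊕_{n even} Θ_n as an infinite matrix on ℤ, where
Θ_n = [[conj α_n, ρ_n],[ρ_n, -α_n]] acts on coordinates {n, n+1}. -/
noncomputable def Lmat (α : ℤ → ℂ) (j k : ℤ) : ℂ :=
  if Even j then
    if k = j then (starRingEnd ℂ) (α j) else if k = j + 1 then (rho α j : ℂ) else 0
  else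
    if k = j then -α (j - 1) else if k = j - 1 then (rho α (j - 1) : ℂ) else 0

/-- 𝓜 = ⊕_{n odd} Θ_n as an infinite matrix on ℤ. -/
noncomputable def Mmat (α : ℤ → ℂ) (j k : ℤ) : ℂ :=
  if Odd j then
    if k = j then (starRingEnd ℂ) (α j) else if k = j + 1 then (rho α j : ℂ) else 0
  else
    if k = j then -α (j - 1) else if k = j - 1 then (rho α (j - 1) : ℂ) else 0

/-- The tridiagonal matrix S_z = z·𝓛* − 𝓜 (entries). -/
noncomputable def Amat (α : ℤ → ℂ) (z : ℂ) (j k : ℤ) : ℂ :=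
  z * (starRingEnd ℂ) (Lmat α k j) - Mmat α j k

/-- The extended CMV matrix ℰ in its five-diagonal form (eq. (2.2) of the paper). -/
noncomputable def Ecmv (α : ℤ → ℂ) (j k : ℤ) : ℂ :=
  if Even j then
    if k = j - 1 then (starRingEnd ℂ) (α j) * (rho α (j - 1) : ℂ)
    else if k = j then -((starRingEnd ℂ) (α j)) * α (j - 1)
    else if k = j + 1 then (rho α j : ℂ) * (starRingEnd ℂ) (α (j + 1))
    else if k = j + 2 then (rho α j : ℂ) * (rho α (j + 1) : ℂ)
    else 0
  else
    if k = j - 2 then (rho α (j - 1) : ℂ) * (rho α (j - 2) : ℂ)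
    else if k = j - 1 then -(rho α (j - 1) : ℂ) * α (j - 2)
    else if k = j then -α (j - 1) * (starRingEnd ℂ) (α j)
    else if k = j + 1 then -α (j - 1) * (rho α j : ℂ)
    else 0

/-- Verblunsky coefficients with modified boundary conditions α_{a-1} = β, α_b = γ. -/
noncomputable def modAlpha (α : ℤ → ℂ) (a b : ℤ) (β γ : ℂ) : ℤ → ℂ :=
  Function.update (Function.update α (a - 1) β) b γ

/-- Determinant of the restriction of an infinite matrix to the window [a,b]. -/
noncomputable def detIcc (A : ℤ → ℤ → ℂ) (a b : ℤ) : ℂ :=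
  Matrix.det (Matrix.of fun i j : ↥(Finset.Icc a b) => A i.1 j.1)

/-- 𝒫_{[a,b],z} = det(z·𝓛* − 𝓜) restricted to [a,b], built from coefficients αm. -/
noncomputable def Pdet (αm : ℤ → ℂ) (a b : ℤ) (z : ℂ) : ℂ :=
  detIcc (Amat αm z) a b

/-- The ρ-normalized determinant P_{[a,b],z} = (ρ_{a-1}⋯ρ_b)^{-1} 𝒫_{[a,b],z};
the ρ's are taken from the unmodified coefficients α while the determinant is
built from the (possibly boundary-modified) coefficients αm. -/
noncomputable def Pnorm (α αm : ℤ → ℂ) (a b : ℤ) (z : ℂ) : ℂ :=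
  ((∏ k ∈ Finset.Icc (a - 1) b, rho α k : ℝ) : ℂ)⁻¹ * Pdet αm a b z

section Helpers

variable (α : ℤ → ℂ) (z : ℂ)

lemma rho_sq (hα : ∀ n, ‖α n‖ < 1) (n : ℤ) :
    ((rho α n : ℝ) : ℂ) ^ 2 = 1 - (starRingEnd ℂ) (α n) * α n := by
  have h1 : (0:ℝ) ≤ 1 - ‖α n‖ ^ 2 := by nlinarith [hα n, norm_nonneg (α n)]
  have h2 : (rho α n) ^ 2 = 1 - ‖α n‖ ^ 2 := Real.sq_sqrt h1
  have h3 : (starRingEnd ℂ) (α n) * α n = ((‖α n‖ ^ 2 : ℝ) : ℂ) := by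
    rw [mul_comm, Complex.mul_conj']
    push_cast
    ring
  rw [h3, ← Complex.ofReal_pow, h2]
  push_cast
  ring

lemma Amat_diag_even {n : ℤ} (he : Even n) :
    Amat α z n n = z * α n + α (n - 1) := by
  have ho : ¬ Odd n := Int.not_odd_iff_even.mpr he
  simp only [Amat, Lmat, Mmat, if_pos he, if_neg ho, if_pos rfl]
  simp

lemma Amat_sub_even {n : ℤ} (he : Even n) :
    Amat α z n (n - 1) = -((rho α (n - 1) : ℝ) : ℂ) := by
  have ho : ¬ Odd n := Int.not_odd_iff_even.mpr he
  have h1 : ¬ Even (n - 1) := by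
    rcases he with ⟨r, hr⟩
    intro ⟨s, hs⟩
    omega
  simp only [Amat, Lmat, Mmat, if_neg h1, if_neg ho,
    if_neg (show ¬ (n = n - 1) by omega), if_neg (show ¬ (n = n - 1 - 1) by omega),
    if_pos rfl]
  simp

lemma Amat_sup_even {n : ℤ} (he : Even n) :
    Amat α z n (n + 1) = z * ((rho α n : ℝ) : ℂ) := by
  have ho : ¬ Odd n := Int.not_odd_iff_even.mpr he
  have h1 : ¬ Even (n + 1) := by
    rcases he with ⟨r, hr⟩
    intro ⟨s, hs⟩
    omega
  simp only [Amat, Lmat, Mmat, if_neg h1, if_neg ho,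
    if_neg (show ¬ (n = n + 1) by omega), if_pos (show n = n + 1 - 1 by ring),
    if_neg (show ¬ (n + 1 = n) by omega), if_neg (show ¬ (n + 1 = n - 1) by omega)]
  simp

lemma Amat_diag_odd {n : ℤ} (ho : Odd n) :
    Amat α z n n = -(z * (starRingEnd ℂ) (α (n - 1))) - (starRingEnd ℂ) (α n) := by
  have he : ¬ Even n := Int.not_even_iff_odd.mpr ho
  simp only [Amat, Lmat, Mmat, if_neg he, if_pos ho, if_pos rfl]
  simp

lemma Amat_sub_odd {n : ℤ} (ho : Odd n) :
    Amat α z n (n - 1) = z * ((rho α (n - 1) : ℝ) : ℂ) := by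
  have he : ¬ Even n := Int.not_even_iff_odd.mpr ho
  have h1 : Even (n - 1) := by
    rcases ho with ⟨r, hr⟩
    exact ⟨r, by omega⟩
  simp only [Amat, Lmat, Mmat, if_pos h1, if_pos ho,
    if_neg (show ¬ (n = n - 1) by omega), if_pos (show n = n - 1 + 1 by ring),
    if_neg (show ¬ (n - 1 = n) by omega), if_neg (show ¬ (n - 1 = n + 1) by omega)]
  simp

lemma Amat_sup_odd {n : ℤ} (ho : Odd n) :
    Amat α z n (n + 1) = -((rho α n : ℝ) : ℂ) := by
  have he : ¬ Even n := Int.not_even_iff_odd.mpr ho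
  have h1 : Even (n + 1) := by
    rcases ho with ⟨r, hr⟩
    exact ⟨r + 1, by omega⟩
  simp only [Amat, Lmat, Mmat, if_pos h1, if_pos ho,
    if_neg (show ¬ (n = n + 1) by omega), if_neg (show ¬ (n = n + 1 + 1) by omega),
    if_neg (show ¬ (n + 1 = n) by omega), if_pos rfl]
  simp

lemma Amat_far {j k : ℤ} (h : k < j - 1 ∨ j + 1 < k) : Amat α z j k = 0 := by
  simp only [Amat, Lmat, Mmat]
  split_ifs <;> first | (exfalso; omega) | simp

lemma Amat_congr (α' : ℤ → ℂ) {j k : ℤ}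
    (h1 : α (j - 1) = α' (j - 1)) (h2 : α j = α' j)
    (h3 : α (k - 1) = α' (k - 1)) (h4 : α k = α' k) :
    Amat α z j k = Amat α' z j k := by
  simp only [Amat, Lmat, Mmat, rho, h1, h2, h3, h4]

end Helpers

section Eigen

variable (α : ℤ → ℂ) (z : ℂ) (Ψ : ℤ → ℂ)

lemma eigen_apply (hΨ : ∀ n : ℤ, ∑' k : ℤ, Ecmv α n k * Ψ k = z * Ψ n) (n : ℤ) :
    Ecmv α n (n-2) * Ψ (n-2) + Ecmv α n (n-1) * Ψ (n-1) + Ecmv α n n * Ψ n +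
      Ecmv α n (n+1) * Ψ (n+1) + Ecmv α n (n+2) * Ψ (n+2) = z * Ψ n := by
  rw [← hΨ n]
  have h0 : ∀ k ∉ ({n-2, n-1, n, n+1, n+2} : Finset ℤ), Ecmv α n k * Ψ k = 0 := by
    intro k hk
    simp only [Finset.mem_insert, Finset.mem_singleton, not_or] at hk
    have h1 : Ecmv α n k = 0 := by
      simp only [Ecmv]
      split_ifs <;> first | rfl | (exfalso; omega)
    rw [h1, zero_mul]
  rw [tsum_eq_sum h0,
    Finset.sum_insert (by simp only [Finset.mem_insert, Finset.mem_singleton]; omega),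
    Finset.sum_insert (by simp only [Finset.mem_insert, Finset.mem_singleton]; omega),
    Finset.sum_insert (by simp only [Finset.mem_insert, Finset.mem_singleton]; omega),
    Finset.sum_insert (by simp only [Finset.mem_singleton]; omega),
    Finset.sum_singleton]
  ring

lemma eigen_even (hΨ : ∀ n : ℤ, ∑' k : ℤ, Ecmv α n k * Ψ k = z * Ψ n) {n : ℤ}
    (he : Even n) :
    (starRingEnd ℂ) (α n) * ((rho α (n-1) : ℝ) : ℂ) * Ψ (n-1)
      - (starRingEnd ℂ) (α n) * α (n-1) * Ψ n
      + ((rho α n : ℝ) : ℂ) * (starRingEnd ℂ) (α (n+1)) * Ψ (n+1)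
      + ((rho α n : ℝ) : ℂ) * ((rho α (n+1) : ℝ) : ℂ) * Ψ (n+2) = z * Ψ n := by
  have h := eigen_apply α z Ψ hΨ n
  rw [show Ecmv α n (n-2) = 0 by
        simp only [Ecmv, if_pos he]
        rw [if_neg (show ¬ (n-2 = n-1) by omega), if_neg (show ¬ (n-2 = n) by omega),
          if_neg (show ¬ (n-2 = n+1) by omega), if_neg (show ¬ (n-2 = n+2) by omega)],
      show Ecmv α n (n-1) = (starRingEnd ℂ) (α n) * ((rho α (n-1) : ℝ) : ℂ) by
        simp only [Ecmv, if_pos he]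
        simp,
      show Ecmv α n n = -((starRingEnd ℂ) (α n)) * α (n-1) by
        simp only [Ecmv, if_pos he]
        rw [if_neg (show ¬ (n = n-1) by omega)]
        simp,
      show Ecmv α n (n+1) = ((rho α n : ℝ) : ℂ) * (starRingEnd ℂ) (α (n+1)) by
        simp only [Ecmv, if_pos he]
        rw [if_neg (show ¬ (n+1 = n-1) by omega), if_neg (show ¬ (n+1 = n) by omega)]
        simp,
      show Ecmv α n (n+2) = ((rho α n : ℝ) : ℂ) * ((rho α (n+1) : ℝ) : ℂ) by
        simp only [Ecmv, if_pos he]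
        rw [if_neg (show ¬ (n+2 = n-1) by omega), if_neg (show ¬ (n+2 = n) by omega),
          if_neg (show ¬ (n+2 = n+1) by omega)]
        simp] at h
  linear_combination h

lemma eigen_odd (hΨ : ∀ n : ℤ, ∑' k : ℤ, Ecmv α n k * Ψ k = z * Ψ n) {n : ℤ}
    (ho : Odd n) :
    ((rho α (n-1) : ℝ) : ℂ) * ((rho α (n-2) : ℝ) : ℂ) * Ψ (n-2)
      - ((rho α (n-1) : ℝ) : ℂ) * α (n-2) * Ψ (n-1)
      - α (n-1) * (starRingEnd ℂ) (α n) * Ψ n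
      - α (n-1) * ((rho α n : ℝ) : ℂ) * Ψ (n+1) = z * Ψ n := by
  have hne : ¬ Even n := Int.not_even_iff_odd.mpr ho
  have h := eigen_apply α z Ψ hΨ n
  rw [show Ecmv α n (n-2) = ((rho α (n-1) : ℝ) : ℂ) * ((rho α (n-2) : ℝ) : ℂ) by
        simp only [Ecmv, if_neg hne]
        simp,
      show Ecmv α n (n-1) = -((rho α (n-1) : ℝ) : ℂ) * α (n-2) by
        simp only [Ecmv, if_neg hne]
        rw [if_neg (show ¬ (n-1 = n-2) by omega)]
        simp,
      show Ecmv α n n = -α (n-1) * (starRingEnd ℂ) (α n) by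
        simp only [Ecmv, if_neg hne]
        rw [if_neg (show ¬ (n = n-2) by omega), if_neg (show ¬ (n = n-1) by omega)]
        simp,
      show Ecmv α n (n+1) = -α (n-1) * ((rho α n : ℝ) : ℂ) by
        simp only [Ecmv, if_neg hne]
        rw [if_neg (show ¬ (n+1 = n-2) by omega), if_neg (show ¬ (n+1 = n-1) by omega),
          if_neg (show ¬ (n+1 = n) by omega)]
        simp,
      show Ecmv α n (n+2) = 0 by
        simp only [Ecmv, if_neg hne]
        rw [if_neg (show ¬ (n+2 = n-2) by omega), if_neg (show ¬ (n+2 = n-1) by omega),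
          if_neg (show ¬ (n+2 = n) by omega), if_neg (show ¬ (n+2 = n+1) by omega)]] at h
  linear_combination h

lemma Arow (hα : ∀ n, ‖α n‖ < 1)
    (hΨ : ∀ n : ℤ, ∑' k : ℤ, Ecmv α n k * Ψ k = z * Ψ n) (n : ℤ) :
    Amat α z n (n-1) * Ψ (n-1) + Amat α z n n * Ψ n + Amat α z n (n+1) * Ψ (n+1) = 0 := by
  rcases Int.even_or_odd n with he | ho
  · have E1 := eigen_even α z Ψ hΨ he
    have E2 := eigen_odd α z Ψ hΨ (n := n + 1) (Even.add_one he)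
    simp only [show n + 1 - 1 = n by ring, show n + 1 - 2 = n - 1 by ring,
      show n + 1 + 1 = n + 2 by ring] at E2
    rw [Amat_sub_even α z he, Amat_diag_even α z he, Amat_sup_even α z he]
    have hr := rho_sq α hα n
    linear_combination (-(α n)) * E1 + (-((rho α n : ℝ) : ℂ)) * E2 +
      (((rho α (n-1) : ℝ) : ℂ) * Ψ (n-1) - α (n-1) * Ψ n) * hr
  · have E0 := eigen_even α z Ψ hΨ (n := n - 1)
      (by rcases ho with ⟨r, hr⟩; exact ⟨r, by omega⟩)
    have E1 := eigen_odd α z Ψ hΨ ho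
    simp only [show n - 1 - 1 = n - 2 by ring, show n - 1 + 1 = n by ring,
      show n - 1 + 2 = n + 1 by ring] at E0
    rw [Amat_sub_odd α z ho, Amat_diag_odd α z ho, Amat_sup_odd α z ho]
    have hr := rho_sq α hα (n - 1)
    linear_combination (-((rho α (n-1) : ℝ) : ℂ)) * E0 + ((starRingEnd ℂ) (α (n-1))) * E1 +
      ((starRingEnd ℂ) (α n) * Ψ n + ((rho α n : ℝ) : ℂ) * Ψ (n+1)) * hr

end Eigen

lemma modAlpha_noteq (α : ℤ → ℂ) (a b : ℤ) (β γ : ℂ) {m : ℤ} (h1 : m ≠ a - 1)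
    (h2 : m ≠ b) : modAlpha α a b β γ m = α m := by
  unfold modAlpha
  rw [Function.update_of_ne h2, Function.update_of_ne h1]

lemma modAlpha_left (α : ℤ → ℂ) (a b : ℤ) (β γ : ℂ) (h : a - 1 ≠ b) :
    modAlpha α a b β γ (a - 1) = β := by
  unfold modAlpha
  rw [Function.update_of_ne h, Function.update_self]

lemma modAlpha_right (α : ℤ → ℂ) (a b : ℤ) (β γ : ℂ) :
    modAlpha α a b β γ b = γ := by
  unfold modAlpha
  rw [Function.update_self]

lemma rho_congr {α α' : ℤ → ℂ} {m : ℤ} (h : α m = α' m) : rho α m = rho α' m := by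
  unfold rho
  rw [h]

/-- Poisson formula: If ℰΨ = zΨ, |β| = |γ| = 1, and G is the
Green's function, i.e. the inverse of A^{β,γ}_{[a,b],z} = z(𝓛^{β,γ}_{[a,b]})* − 𝓜^{β,γ}_{[a,b]},
then for a < x < b,
Ψ(x) = -G(x,a)·B_a - G(x,b)·B_b with the boundary terms B_a, B_b below. -/
theorem poisson_formula (α : ℤ → ℂ) (hα : ∀ n, ‖α n‖ < 1)
    (β γ : ℂ) (hβ : ‖β‖ = 1) (hγ : ‖γ‖ = 1) (z : ℂ)
    (a b x : ℤ) (hax : a < x) (hxb : x < b)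
    (Ψ : ℤ → ℂ) (hΨ : ∀ n : ℤ, ∑' k : ℤ, Ecmv α n k * Ψ k = z * Ψ n)
    (G : ℤ → ℤ → ℂ)
    (hG₁ : ∀ j ∈ Finset.Icc a b, ∀ k ∈ Finset.Icc a b,
      (∑ i ∈ Finset.Icc a b, Amat (modAlpha α a b β γ) z j i * G i k) =
        if j = k then 1 else 0)
    (hG₂ : ∀ j ∈ Finset.Icc a b, ∀ k ∈ Finset.Icc a b,
      (∑ i ∈ Finset.Icc a b, G j i * Amat (modAlpha α a b β γ) z i k) =
        if j = k then 1 else 0) :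
    Ψ x =
      -(G x a) *
        (if Odd a then
          Ψ a * (z * (starRingEnd ℂ) β - z * (starRingEnd ℂ) (α (a - 1))) +
            Ψ (a - 1) * z * (rho α (a - 1) : ℂ)
        else
          Ψ a * (α (a - 1) - β) - Ψ (a - 1) * (rho α (a - 1) : ℂ)) -
      (G x b) *
        (if Odd b then
          Ψ b * (-(starRingEnd ℂ) (α b) + (starRingEnd ℂ) γ) -
            Ψ (b + 1) * (rho α b : ℂ)
        else
          Ψ b * (z * α b - z * γ) + Ψ (b + 1) * z * (rho α b : ℂ)) := by
  have hab : a < b := lt_trans hax hxb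
  set αm := modAlpha α a b β γ with hαm
  have hx : x ∈ Finset.Icc a b := by simp only [Finset.mem_Icc]; omega
  -- agreement of αm with α away from a-1, b, and rho agreement
  have hmod : ∀ m : ℤ, m ≠ a - 1 → m ≠ b → αm m = α m := fun m h1 h2 =>
    modAlpha_noteq α a b β γ h1 h2
  have hrho : ∀ m : ℤ, m ≠ a - 1 → m ≠ b → rho αm m = rho α m := fun m h1 h2 =>
    rho_congr (hmod m h1 h2)
  have hleft : αm (a - 1) = β := by
    rw [hαm]; exact modAlpha_left α a b β γ (by omega)
  have hright : αm b = γ := by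
    rw [hαm]; exact modAlpha_right α a b β γ
  -- Step 1 : Ψ x as a double sum
  have key1 : Ψ x =
      ∑ i ∈ Finset.Icc a b, G x i * (∑ j ∈ Finset.Icc a b, Amat αm z i j * Ψ j) := by
    have c1 : ∑ i ∈ Finset.Icc a b, G x i * (∑ j ∈ Finset.Icc a b, Amat αm z i j * Ψ j)
        = ∑ i ∈ Finset.Icc a b, ∑ j ∈ Finset.Icc a b, G x i * Amat αm z i j * Ψ j := by
      apply Finset.sum_congr rfl
      intro i _
      rw [Finset.mul_sum]
      apply Finset.sum_congr rfl
      intro j _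
      ring
    rw [c1, Finset.sum_comm]
    have c2 : ∀ j ∈ Finset.Icc a b,
        ∑ i ∈ Finset.Icc a b, G x i * Amat αm z i j * Ψ j
          = (if x = j then 1 else 0) * Ψ j := by
      intro j hj
      rw [← Finset.sum_mul, hG₂ x hx j hj]
    rw [Finset.sum_congr rfl c2]
    simp only [ite_mul, one_mul, zero_mul]
    rw [Finset.sum_ite_eq, if_pos hx]
  -- Step 2 : interior rows vanish
  have interior : ∀ i : ℤ, a < i → i < b →
      (∑ j ∈ Finset.Icc a b, Amat αm z i j * Ψ j) = 0 := by
    intro i hai hib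
    have hsub : ({i - 1, i, i + 1} : Finset ℤ) ⊆ Finset.Icc a b := by
      intro m hm
      simp only [Finset.mem_insert, Finset.mem_singleton] at hm
      simp only [Finset.mem_Icc]
      omega
    have hvan : ∀ j ∈ Finset.Icc a b, j ∉ ({i - 1, i, i + 1} : Finset ℤ) →
        Amat αm z i j * Ψ j = 0 := by
      intro j _ hj
      simp only [Finset.mem_insert, Finset.mem_singleton, not_or] at hj
      rw [Amat_far αm z (by omega), zero_mul]
    rw [← Finset.sum_subset hsub hvan,
      Finset.sum_insert (by simp only [Finset.mem_insert, Finset.mem_singleton]; omega),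
      Finset.sum_insert (by simp only [Finset.mem_singleton]; omega),
      Finset.sum_singleton]
    have harow := Arow α z Ψ hα hΨ i
    rcases Int.even_or_odd i with he | ho
    · rw [Amat_sub_even αm z he, Amat_diag_even αm z he, Amat_sup_even αm z he,
        hmod i (by omega) (by omega), hmod (i - 1) (by omega) (by omega),
        hrho i (by omega) (by omega), hrho (i - 1) (by omega) (by omega)]
      rw [Amat_sub_even α z he, Amat_diag_even α z he, Amat_sup_even α z he] at harow
      linear_combination harow
    · rw [Amat_sub_odd αm z ho, Amat_diag_odd αm z ho, Amat_sup_odd αm z ho,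
        hmod i (by omega) (by omega), hmod (i - 1) (by omega) (by omega),
        hrho i (by omega) (by omega), hrho (i - 1) (by omega) (by omega)]
      rw [Amat_sub_odd α z ho, Amat_diag_odd α z ho, Amat_sup_odd α z ho] at harow
      linear_combination harow
  -- Step 3 : boundary row at a
  have hRa : (∑ j ∈ Finset.Icc a b, Amat αm z a j * Ψ j) =
      -(if Odd a then
          Ψ a * (z * (starRingEnd ℂ) β - z * (starRingEnd ℂ) (α (a - 1))) +
            Ψ (a - 1) * z * (rho α (a - 1) : ℂ)
        else
          Ψ a * (α (a - 1) - β) - Ψ (a - 1) * (rho α (a - 1) : ℂ)) := by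
    have hsub : ({a, a + 1} : Finset ℤ) ⊆ Finset.Icc a b := by
      intro m hm
      simp only [Finset.mem_insert, Finset.mem_singleton] at hm
      simp only [Finset.mem_Icc]
      omega
    have hvan : ∀ j ∈ Finset.Icc a b, j ∉ ({a, a + 1} : Finset ℤ) →
        Amat αm z a j * Ψ j = 0 := by
      intro j hj hj'
      simp only [Finset.mem_insert, Finset.mem_singleton, not_or] at hj'
      simp only [Finset.mem_Icc] at hj
      rw [Amat_far αm z (by omega), zero_mul]
    rw [← Finset.sum_subset hsub hvan,
      Finset.sum_insert (by simp only [Finset.mem_singleton]; omega),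
      Finset.sum_singleton]
    have harow := Arow α z Ψ hα hΨ a
    rcases Int.even_or_odd a with hea | hoa
    · rw [if_neg (Int.not_odd_iff_even.mpr hea)]
      rw [Amat_diag_even αm z hea, Amat_sup_even αm z hea,
        hmod a (by omega) (by omega), hleft,
        hrho a (by omega) (by omega)]
      rw [Amat_diag_even α z hea, Amat_sub_even α z hea, Amat_sup_even α z hea] at harow
      linear_combination harow
    · rw [if_pos hoa]
      rw [Amat_diag_odd αm z hoa, Amat_sup_odd αm z hoa,
        hmod a (by omega) (by omega), hleft,
        hrho a (by omega) (by omega)]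
      rw [Amat_diag_odd α z hoa, Amat_sub_odd α z hoa, Amat_sup_odd α z hoa] at harow
      linear_combination harow
  -- Step 4 : boundary row at b
  have hRb : (∑ j ∈ Finset.Icc a b, Amat αm z b j * Ψ j) =
      -(if Odd b then
          Ψ b * (-(starRingEnd ℂ) (α b) + (starRingEnd ℂ) γ) -
            Ψ (b + 1) * (rho α b : ℂ)
        else
          Ψ b * (z * α b - z * γ) + Ψ (b + 1) * z * (rho α b : ℂ)) := by
    have hsub : ({b - 1, b} : Finset ℤ) ⊆ Finset.Icc a b := by
      intro m hm
      simp only [Finset.mem_insert, Finset.mem_singleton] at hm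
      simp only [Finset.mem_Icc]
      omega
    have hvan : ∀ j ∈ Finset.Icc a b, j ∉ ({b - 1, b} : Finset ℤ) →
        Amat αm z b j * Ψ j = 0 := by
      intro j hj hj'
      simp only [Finset.mem_insert, Finset.mem_singleton, not_or] at hj'
      simp only [Finset.mem_Icc] at hj
      rw [Amat_far αm z (by omega), zero_mul]
    rw [← Finset.sum_subset hsub hvan,
      Finset.sum_insert (by simp only [Finset.mem_singleton]; omega),
      Finset.sum_singleton]
    have harow := Arow α z Ψ hα hΨ b
    rcases Int.even_or_odd b with heb | hob
    · rw [if_neg (Int.not_odd_iff_even.mpr heb)]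
      rw [Amat_diag_even αm z heb, Amat_sub_even αm z heb,
        hright, hmod (b - 1) (by omega) (by omega),
        hrho (b - 1) (by omega) (by omega)]
      rw [Amat_diag_even α z heb, Amat_sub_even α z heb, Amat_sup_even α z heb] at harow
      linear_combination harow
    · rw [if_pos hob]
      rw [Amat_diag_odd αm z hob, Amat_sub_odd αm z hob,
        hright, hmod (b - 1) (by omega) (by omega),
        hrho (b - 1) (by omega) (by omega)]
      rw [Amat_diag_odd α z hob, Amat_sub_odd α z hob, Amat_sup_odd α z hob] at harow
      linear_combination harow
  -- Step 5 : collapse the outer sum to the two boundary terms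
  have hsub2 : ({a, b} : Finset ℤ) ⊆ Finset.Icc a b := by
    intro m hm
    simp only [Finset.mem_insert, Finset.mem_singleton] at hm
    simp only [Finset.mem_Icc]
    omega
  have hvan2 : ∀ i ∈ Finset.Icc a b, i ∉ ({a, b} : Finset ℤ) →
      G x i * (∑ j ∈ Finset.Icc a b, Amat αm z i j * Ψ j) = 0 := by
    intro i hi hi'
    simp only [Finset.mem_insert, Finset.mem_singleton, not_or] at hi'
    simp only [Finset.mem_Icc] at hi
    rw [interior i (by omega) (by omega), mul_zero]
  rw [key1, ← Finset.sum_subset hsub2 hvan2,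
    Finset.sum_insert (by simp only [Finset.mem_singleton]; omega),
    Finset.sum_singleton, hRa, hRb]
  ring
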